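/- Let (A_j)_{j ∈ ℕ} be matrices in ℝ^{n×n}, B ∈ ℝ^{n×m}, define G_0 = I_n and G_k = ∑_{j=0}^{k-1} A_j G_{k-1-j} for k ≥ 1, and fix K ≥ 1 and an initial state x_0 ∈ ℝ^n. Suppose the controllability Gramian W := ∑_{j=0}^{K-1} G_j B Bᵀ G_jᵀ is invertible. Define the input sequence u[k] := −Bᵀ G_{K-1-k}ᵀ W^{-1} G_K x_0 for 0 ≤ k ≤ K−1. Then the trajectory x : ℕ → ℝ^n determined by x[0] = x_0 and x[k+1] = ∑_{j=0}^{k} A_j x[k−j] + B u[k] satisfies x[K] = 0; in particular, the discrete-time fractional-order system is controllable at time K from any initial state. -/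
import Mathlib


open Matrix

/-- State-transition matrices: `G_0 = I` and `G_k = ∑_{j=0}^{k-1} A_j G_{k-1-j}` for `k ≥ 1`. -/
noncomputable def Gmat {n : ℕ} (A : ℕ → Matrix (Fin n) (Fin n) ℝ) : ℕ → Matrix (Fin n) (Fin n) ℝ
  | 0 => 1
  | k + 1 => ∑ j ∈ Finset.range (k + 1), A j * Gmat A (k - j)
  decreasing_by exact Nat.lt_succ_of_le (Nat.sub_le _ _)

private lemma my_sum_mulVec {n p : ℕ} {ι : Type*} (s : Finset ι)
    (M : ι → Matrix (Fin n) (Fin p) ℝ) (v : Fin p → ℝ) :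
    (∑ i ∈ s, M i).mulVec v = ∑ i ∈ s, (M i).mulVec v := by
  induction s using Finset.cons_induction with
  | empty => simp [Matrix.zero_mulVec]
  | cons a s h ih => simp [Finset.sum_cons, Matrix.add_mulVec, ih]

private lemma my_mulVec_sum {n p : ℕ} {ι : Type*} (s : Finset ι)
    (M : Matrix (Fin n) (Fin p) ℝ) (v : ι → Fin p → ℝ) :
    M.mulVec (∑ i ∈ s, v i) = ∑ i ∈ s, M.mulVec (v i) := by
  induction s using Finset.cons_induction with
  | empty => simp [Matrix.mulVec_zero]
  | cons a s h ih => simp [Finset.sum_cons, Matrix.mulVec_add, ih]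

private lemma tri_swap {M : Type*} [AddCommMonoid M] (k : ℕ) (f : ℕ → ℕ → M) :
    ∑ j ∈ Finset.range (k + 1), ∑ i ∈ Finset.range (k - j), f j i
      = ∑ i ∈ Finset.range k, ∑ j ∈ Finset.range (k - i), f j i := by
  rw [Finset.sum_sigma', Finset.sum_sigma']
  exact Finset.sum_nbij' (fun p => ⟨p.2, p.1⟩) (fun p => ⟨p.2, p.1⟩)
    (by simp only [Finset.mem_sigma, Finset.mem_range]; omega)
    (by simp only [Finset.mem_sigma, Finset.mem_range]; omega)
    (fun _ _ => rfl) (fun _ _ => rfl) (fun _ _ => rfl)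

/-- If the controllability Gramian `W = ∑_{j=0}^{K-1} G_j B Bᵀ G_jᵀ` is invertible and the
input sequence `u[k] = −Bᵀ G_{K-1-k}ᵀ W⁻¹ G_K x_0` (for `0 ≤ k ≤ K−1`) is applied, then
the trajectory starting at `x_0` satisfies `x[K] = 0`: the discrete-time fractional-order
system is controllable at time `K` from any initial state. -/
theorem fos_controllability (n m K : ℕ) (hK : 1 ≤ K)
    (A : ℕ → Matrix (Fin n) (Fin n) ℝ) (B : Matrix (Fin n) (Fin m) ℝ)
    (x0 : Fin n → ℝ)
    (W : Matrix (Fin n) (Fin n) ℝ)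
    (hW : W = ∑ j ∈ Finset.range K, Gmat A j * B * Bᵀ * (Gmat A j)ᵀ)
    (hWinv : IsUnit W.det)
    (u : ℕ → Fin m → ℝ)
    (hu : ∀ k : ℕ, k ≤ K - 1 →
      u k = -((Bᵀ * (Gmat A (K - 1 - k))ᵀ * W⁻¹ * Gmat A K).mulVec x0))
    (x : ℕ → Fin n → ℝ) (hx0 : x 0 = x0)
    (hx : ∀ k : ℕ,
      x (k + 1) = ∑ j ∈ Finset.range (k + 1), (A j).mulVec (x (k - j)) + B.mulVec (u k)) :
    x K = 0 := by
  have hG : ∀ k : ℕ, Gmat A (k + 1) = ∑ j ∈ Finset.range (k + 1), A j * Gmat A (k - j) :=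
    fun k => by rw [Gmat]
  -- solution formula
  have key : ∀ k : ℕ, x k = (Gmat A k).mulVec x0
      + ∑ i ∈ Finset.range k, (Gmat A (k - 1 - i) * B).mulVec (u i) := by
    intro k
    induction k using Nat.strong_induction_on with
    | _ k ih =>
      match k with
      | 0 => simp [Gmat, hx0]
      | Nat.succ k =>
        rw [hx k]
        have h1 : ∀ j ∈ Finset.range (k + 1), (A j).mulVec (x (k - j)) =
            (A j * Gmat A (k - j)).mulVec x0
              + ∑ i ∈ Finset.range (k - j),
                  ((A j * Gmat A (k - j - 1 - i) * B).mulVec (u i)) := by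
          intro j hj
          rw [ih (k - j) (Nat.lt_succ_of_le (Nat.sub_le _ _)), Matrix.mulVec_add,
            Matrix.mulVec_mulVec, my_mulVec_sum]
          congr 1
          refine Finset.sum_congr rfl fun i _ => ?_
          rw [Matrix.mulVec_mulVec, Matrix.mul_assoc]
        rw [Finset.sum_congr rfl h1, Finset.sum_add_distrib, ← my_sum_mulVec, ← hG]
        have h2 : ∑ j ∈ Finset.range (k + 1), ∑ i ∈ Finset.range (k - j),
              (A j * Gmat A (k - j - 1 - i) * B).mulVec (u i)
            = ∑ i ∈ Finset.range k, (Gmat A (k - i) * B).mulVec (u i) := by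
          rw [tri_swap]
          refine Finset.sum_congr rfl fun i hi => ?_
          simp only [Finset.mem_range] at hi
          have hki : k - i = (k - i - 1) + 1 := by omega
          have hGi : ∑ j ∈ Finset.range (k - i), A j * Gmat A (k - j - 1 - i)
              = Gmat A (k - i) := by
            rw [hki, hG]
            refine Finset.sum_congr rfl fun j hj => ?_
            have h5 : k - j - 1 - i = k - i - 1 - j := by omega
            rw [h5]
          rw [← my_sum_mulVec, ← hGi, Matrix.sum_mul]
        rw [h2]
        have h3 : ∑ i ∈ Finset.range (k + 1), (Gmat A (k + 1 - 1 - i) * B).mulVec (u i)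
            = ∑ i ∈ Finset.range k, (Gmat A (k - i) * B).mulVec (u i) + B.mulVec (u k) := by
          rw [Finset.sum_range_succ]
          have e1 : ∑ i ∈ Finset.range k, (Gmat A (k + 1 - 1 - i) * B) *ᵥ u i
              = ∑ i ∈ Finset.range k, (Gmat A (k - i) * B) *ᵥ u i := by
            refine Finset.sum_congr rfl fun i hi => ?_
            have : k + 1 - 1 - i = k - i := by omega
            rw [this]
          have e2 : k + 1 - 1 - k = 0 := by omega
          rw [e1, e2]
          simp [Gmat]
        rw [h3, add_assoc]
  -- now compute x K
  rw [key K]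
  have hterm : ∀ i ∈ Finset.range K, (Gmat A (K - 1 - i) * B).mulVec (u i)
      = -((Gmat A (K - 1 - i) * B * Bᵀ * (Gmat A (K - 1 - i))ᵀ * (W⁻¹ * Gmat A K)).mulVec x0) := by
    intro i hi
    simp only [Finset.mem_range] at hi
    rw [hu i (by omega), Matrix.mulVec_neg, Matrix.mulVec_mulVec]
    congr 1
    simp [Matrix.mul_assoc]
  rw [Finset.sum_congr rfl hterm, Finset.sum_neg_distrib, ← my_sum_mulVec]
  have hsum : ∑ i ∈ Finset.range K,
      Gmat A (K - 1 - i) * B * Bᵀ * (Gmat A (K - 1 - i))ᵀ * (W⁻¹ * Gmat A K)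
      = W * (W⁻¹ * Gmat A K) := by
    rw [← Finset.sum_mul, hW]
    congr 1
    exact Finset.sum_range_reflect (fun j => Gmat A j * B * Bᵀ * (Gmat A j)ᵀ) K
  rw [hsum, ← Matrix.mul_assoc, Matrix.mul_nonsing_inv _ hWinv, Matrix.one_mul]
  exact add_neg_cancel _
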